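/- Let (U, ℛ) be a weakly quasitriangular Hopf algebra over a field k and let (B, Δ_B, 𝒦) be a weakly quasitriangular right comodule algebra over (U, ℛ). Then the automorphisms 𝒦 and ℛ satisfy the reflection equation 𝒦₁₂∘ℛ₃₂∘𝒦₁₃∘ℛ₂₃ = ℛ₃₂∘𝒦₁₃∘ℛ₂₃∘𝒦₁₂ as algebra automorphisms of B⊗U⊗U. -/

import Mathlib

open TensorProduct

noncomputable section

variable (k : Type*) [Field k]

/-- Conjugation by a unit, as a `k`-algebra automorphism. -/
def adUnit {A : Type*} [Ring A] [Algebra k A] (u : Aˣ) : A ≃ₐ[k] A where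
  toFun a := ↑u * a * ↑u⁻¹
  invFun a := ↑u⁻¹ * a * ↑u
  left_inv a := by simp [mul_assoc]
  right_inv a := by simp [mul_assoc]
  map_add' a b := by noncomm_ring
  map_mul' a b := by
    show ↑u * (a * b) * ↑u⁻¹ = ↑u * a * ↑u⁻¹ * (↑u * b * ↑u⁻¹)
    simp [mul_assoc]
  commutes' r := by
    show ↑u * algebraMap k A r * ↑u⁻¹ = algebraMap k A r
    rw [← Algebra.commutes r (↑u : A), mul_assoc, Units.mul_inv, mul_one]

variable (U : Type*) [Ring U] [HopfAlgebra k U]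

/-- The coproduct `Δ : U → U ⊗ U` as an algebra homomorphism. -/
abbrev Δ : U →ₐ[k] U ⊗[k] U := Bialgebra.comulAlgHom k U

/-- The opposite coproduct `Δᵒᵖ = σ ∘ Δ`. -/
def Δop : U →ₐ[k] U ⊗[k] U :=
  (Algebra.TensorProduct.comm k U U).toAlgHom.comp (Bialgebra.comulAlgHom k U)

/-- The flip of the last two tensor factors of `(U ⊗ U) ⊗ U`. -/
def σ23 : ((U ⊗[k] U) ⊗[k] U) ≃ₐ[k] ((U ⊗[k] U) ⊗[k] U) :=
  (Algebra.TensorProduct.assoc k k k U U U).trans <|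
    (Algebra.TensorProduct.congr AlgEquiv.refl (Algebra.TensorProduct.comm k U U)).trans
      (Algebra.TensorProduct.assoc k k k U U U).symm

variable {k U}

/-- `F₁₂ = F ⊗ id` on `(U ⊗ U) ⊗ U`. -/
def leg12 (F : (U ⊗[k] U) ≃ₐ[k] (U ⊗[k] U)) :
    ((U ⊗[k] U) ⊗[k] U) ≃ₐ[k] ((U ⊗[k] U) ⊗[k] U) :=
  Algebra.TensorProduct.congr F AlgEquiv.refl

/-- `F₂₃ = id ⊗ F` on `(U ⊗ U) ⊗ U` (transported along the associator). -/
def leg23 (F : (U ⊗[k] U) ≃ₐ[k] (U ⊗[k] U)) :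
    ((U ⊗[k] U) ⊗[k] U) ≃ₐ[k] ((U ⊗[k] U) ⊗[k] U) :=
  (Algebra.TensorProduct.assoc k k k U U U).trans <|
    (Algebra.TensorProduct.congr AlgEquiv.refl F).trans
      (Algebra.TensorProduct.assoc k k k U U U).symm

/-- `F₁₃ = σ₂₃ ∘ F₁₂ ∘ σ₂₃` on `(U ⊗ U) ⊗ U`. -/
def leg13 (F : (U ⊗[k] U) ≃ₐ[k] (U ⊗[k] U)) :
    ((U ⊗[k] U) ⊗[k] U) ≃ₐ[k] ((U ⊗[k] U) ⊗[k] U) :=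
  (σ23 k U).trans ((leg12 F).trans (σ23 k U))

/-- `u₁₂ = u ⊗ 1` in `(U ⊗ U) ⊗ U`. -/
def el12 (u : U ⊗[k] U) : (U ⊗[k] U) ⊗[k] U := u ⊗ₜ[k] (1 : U)

/-- `u₂₃ = 1 ⊗ u` in `(U ⊗ U) ⊗ U`. -/
def el23 (u : U ⊗[k] U) : (U ⊗[k] U) ⊗[k] U :=
  (Algebra.TensorProduct.assoc k k k U U U).symm ((1 : U) ⊗ₜ[k] u)

/-- `u₁₃ = σ₂₃ (u₁₂)` in `(U ⊗ U) ⊗ U`. -/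
def el13 (u : U ⊗[k] U) : (U ⊗[k] U) ⊗[k] U := σ23 k U (el12 u)

variable (k U)

/-- `Δ ⊗ id : U ⊗ U → (U ⊗ U) ⊗ U`. -/
def ΔId : (U ⊗[k] U) →ₐ[k] ((U ⊗[k] U) ⊗[k] U) :=
  Algebra.TensorProduct.map (Bialgebra.comulAlgHom k U) (AlgHom.id k U)

/-- `id ⊗ Δ : U ⊗ U → (U ⊗ U) ⊗ U` (transported along the associator). -/
def IdΔ : (U ⊗[k] U) →ₐ[k] ((U ⊗[k] U) ⊗[k] U) :=
  (Algebra.TensorProduct.assoc k k k U U U).symm.toAlgHom.comp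
    (Algebra.TensorProduct.map (AlgHom.id k U) (Bialgebra.comulAlgHom k U))

end

noncomputable section

variable (k : Type*) [Field k] (U : Type*) [Ring U] [HopfAlgebra k U]
variable (B : Type*) [Ring B] [Algebra k B]

/-- The flip of the two `U`-factors of `(B ⊗ U) ⊗ U`. -/
def τ23 : ((B ⊗[k] U) ⊗[k] U) ≃ₐ[k] ((B ⊗[k] U) ⊗[k] U) :=
  (Algebra.TensorProduct.assoc k k k B U U).trans <|
    (Algebra.TensorProduct.congr AlgEquiv.refl (Algebra.TensorProduct.comm k U U)).trans
      (Algebra.TensorProduct.assoc k k k B U U).symm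

variable {k U B}

/-- `G₁₂ = G ⊗ id` on `(B ⊗ U) ⊗ U`. -/
def legB12 (G : (B ⊗[k] U) ≃ₐ[k] (B ⊗[k] U)) :
    ((B ⊗[k] U) ⊗[k] U) ≃ₐ[k] ((B ⊗[k] U) ⊗[k] U) :=
  Algebra.TensorProduct.congr G AlgEquiv.refl

/-- `G₁₃ = τ₂₃ ∘ G₁₂ ∘ τ₂₃` on `(B ⊗ U) ⊗ U`. -/
def legB13 (G : (B ⊗[k] U) ≃ₐ[k] (B ⊗[k] U)) :
    ((B ⊗[k] U) ⊗[k] U) ≃ₐ[k] ((B ⊗[k] U) ⊗[k] U) :=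
  (τ23 k U B).trans ((legB12 G).trans (τ23 k U B))

/-- `F₂₃ = id_B ⊗ F` on `(B ⊗ U) ⊗ U` (transported along the associator). -/
def legU23 (F : (U ⊗[k] U) ≃ₐ[k] (U ⊗[k] U)) :
    ((B ⊗[k] U) ⊗[k] U) ≃ₐ[k] ((B ⊗[k] U) ⊗[k] U) :=
  (Algebra.TensorProduct.assoc k k k B U U).trans <|
    (Algebra.TensorProduct.congr AlgEquiv.refl F).trans
      (Algebra.TensorProduct.assoc k k k B U U).symm

/-- `F₃₂ = τ₂₃ ∘ F₂₃ ∘ τ₂₃` on `(B ⊗ U) ⊗ U`. -/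
def legU32 (F : (U ⊗[k] U) ≃ₐ[k] (U ⊗[k] U)) :
    ((B ⊗[k] U) ⊗[k] U) ≃ₐ[k] ((B ⊗[k] U) ⊗[k] U) :=
  (τ23 k U B).trans ((legU23 F).trans (τ23 k U B))

/-- `v₁₂ = v ⊗ 1` in `(B ⊗ U) ⊗ U`. -/
def elB12 (v : B ⊗[k] U) : (B ⊗[k] U) ⊗[k] U := v ⊗ₜ[k] (1 : U)

/-- `v₁₃ = τ₂₃ (v₁₂)` in `(B ⊗ U) ⊗ U`. -/
def elB13 (v : B ⊗[k] U) : (B ⊗[k] U) ⊗[k] U := τ23 k U B (elB12 v)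

/-- `u₂₃ = 1_B ⊗ u` in `(B ⊗ U) ⊗ U`. -/
def elU23 (u : U ⊗[k] U) : (B ⊗[k] U) ⊗[k] U :=
  (Algebra.TensorProduct.assoc k k k B U U).symm ((1 : B) ⊗ₜ[k] u)

/-- `u₃₂ = τ₂₃ (u₂₃)` in `(B ⊗ U) ⊗ U`. -/
def elU32 (u : U ⊗[k] U) : (B ⊗[k] U) ⊗[k] U := τ23 k U B (elU23 u)

/-- `Δ_B ⊗ id : B ⊗ U → (B ⊗ U) ⊗ U`. -/
def ΔBId (ΔB : B →ₐ[k] B ⊗[k] U) : (B ⊗[k] U) →ₐ[k] ((B ⊗[k] U) ⊗[k] U) :=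
  Algebra.TensorProduct.map ΔB (AlgHom.id k U)

variable (k U B) in
/-- `id_B ⊗ Δ : B ⊗ U → (B ⊗ U) ⊗ U` (transported along the associator). -/
def IdBΔ : (B ⊗[k] U) →ₐ[k] ((B ⊗[k] U) ⊗[k] U) :=
  (Algebra.TensorProduct.assoc k k k B U U).symm.toAlgHom.comp
    (Algebra.TensorProduct.map (AlgHom.id k B) (Bialgebra.comulAlgHom k U))

/-- `B` together with `Δ_B : B →ₐ B ⊗ U` is a right `U`-comodule algebra:
`Δ_B` is coassociative and counital. -/
def IsComoduleAlgebra (ΔB : B →ₐ[k] B ⊗[k] U) : Prop :=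
  (∀ b : B, ΔBId ΔB (ΔB b) = IdBΔ k U B (ΔB b)) ∧
  (∀ b : B, Algebra.TensorProduct.rid k k B
      (Algebra.TensorProduct.map (AlgHom.id k B) (Bialgebra.counitAlgHom k U) (ΔB b)) = b)

end


noncomputable section ReflectionAux

open Coalgebra

variable {k : Type*} [Field k] {U : Type*} [Ring U] [HopfAlgebra k U]
variable {B : Type*} [Ring B] [Algebra k B]

lemma tau23_tmul (b : B) (u v : U) :
    τ23 k U B ((b ⊗ₜ[k] u) ⊗ₜ[k] v) = (b ⊗ₜ[k] v) ⊗ₜ[k] u := by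
  simp [τ23, AlgEquiv.trans_apply, Algebra.TensorProduct.assoc_tmul,
    Algebra.TensorProduct.congr_apply, Algebra.TensorProduct.map_tmul,
    Algebra.TensorProduct.comm_tmul, Algebra.TensorProduct.assoc_symm_tmul]

lemma tau23_tau23 (t : (B ⊗[k] U) ⊗[k] U) : τ23 k U B (τ23 k U B t) = t := by
  induction t using TensorProduct.induction_on with
  | zero => simp
  | add x y hx hy => rw [map_add, map_add, hx, hy]
  | tmul x v =>
    induction x using TensorProduct.induction_on with
    | zero => rw [TensorProduct.zero_tmul, map_zero, map_zero]
    | add x y hx hy => rw [TensorProduct.add_tmul, map_add, map_add, hx, hy]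
    | tmul b u => rw [tau23_tmul, tau23_tmul]

lemma tau_legU32 (F : (U ⊗[k] U) ≃ₐ[k] (U ⊗[k] U)) (t : (B ⊗[k] U) ⊗[k] U) :
    τ23 k U B (legU32 F t) = legU23 F (τ23 k U B t) := by
  show τ23 k U B (((τ23 k U B).trans ((legU23 F).trans (τ23 k U B))) t) = _
  rw [AlgEquiv.trans_apply, AlgEquiv.trans_apply, tau23_tau23]

lemma tau_legU23 (F : (U ⊗[k] U) ≃ₐ[k] (U ⊗[k] U)) (t : (B ⊗[k] U) ⊗[k] U) :
    τ23 k U B (legU23 F t) = legU32 F (τ23 k U B t) := by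
  show _ = ((τ23 k U B).trans ((legU23 F).trans (τ23 k U B))) (τ23 k U B t)
  rw [AlgEquiv.trans_apply, AlgEquiv.trans_apply, tau23_tau23]

lemma tau_legB13 (G : (B ⊗[k] U) ≃ₐ[k] (B ⊗[k] U)) (t : (B ⊗[k] U) ⊗[k] U) :
    τ23 k U B (legB13 G t) = legB12 G (τ23 k U B t) := by
  show τ23 k U B (((τ23 k U B).trans ((legB12 G).trans (τ23 k U B))) t) = _
  rw [AlgEquiv.trans_apply, AlgEquiv.trans_apply, tau23_tau23]

lemma tau_legB12 (G : (B ⊗[k] U) ≃ₐ[k] (B ⊗[k] U)) (t : (B ⊗[k] U) ⊗[k] U) :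
    τ23 k U B (legB12 G t) = legB13 G (τ23 k U B t) := by
  show _ = ((τ23 k U B).trans ((legB12 G).trans (τ23 k U B))) (τ23 k U B t)
  rw [AlgEquiv.trans_apply, AlgEquiv.trans_apply, tau23_tau23]

lemma legU23_assocSymm (F : (U ⊗[k] U) ≃ₐ[k] (U ⊗[k] U)) (b : B) (z : U ⊗[k] U) :
    legU23 F ((Algebra.TensorProduct.assoc k k k B U U).symm (b ⊗ₜ[k] z)) =
      (Algebra.TensorProduct.assoc k k k B U U).symm (b ⊗ₜ[k] F z) := by
  simp [legU23, AlgEquiv.trans_apply, Algebra.TensorProduct.congr_apply,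
    Algebra.TensorProduct.map_tmul]

lemma tau23_assocSymm (b : B) (z : U ⊗[k] U) :
    τ23 k U B ((Algebra.TensorProduct.assoc k k k B U U).symm (b ⊗ₜ[k] z)) =
      (Algebra.TensorProduct.assoc k k k B U U).symm
        (b ⊗ₜ[k] (Algebra.TensorProduct.comm k U U) z) := by
  simp [τ23, AlgEquiv.trans_apply, Algebra.TensorProduct.congr_apply,
    Algebra.TensorProduct.map_tmul]

lemma IdBΔ_tmul (b : B) (u : U) :
    IdBΔ k U B (b ⊗ₜ[k] u) =
      (Algebra.TensorProduct.assoc k k k B U U).symm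
        (b ⊗ₜ[k] (Bialgebra.comulAlgHom k U u)) := by
  simp [IdBΔ, Algebra.TensorProduct.map_tmul]

/-- `τ₂₃ ∘ (id_B ⊗ Δ) = ℛ₂₃ ∘ (id_B ⊗ Δ)` (weak quasi-cocommutativity transported to `B`). -/
lemma tau_IdBΔ (Rr : (U ⊗[k] U) ≃ₐ[k] (U ⊗[k] U))
    (wq1 : ∀ u : U, Rr (Bialgebra.comulAlgHom k U u) = Δop k U u)
    (x : B ⊗[k] U) :
    τ23 k U B (IdBΔ k U B x) = legU23 Rr (IdBΔ k U B x) := by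
  induction x using TensorProduct.induction_on with
  | zero => rw [map_zero, map_zero, map_zero]
  | add x y hx hy => rw [map_add, map_add, map_add, hx, hy]
  | tmul b u =>
    rw [IdBΔ_tmul, tau23_assocSymm, legU23_assocSymm, wq1]
    rfl

lemma legB12_fix (𝒦 : (B ⊗[k] U) ≃ₐ[k] (B ⊗[k] U)) (ΔB : B →ₐ[k] B ⊗[k] U)
    (K1 : ∀ b : B, 𝒦 (ΔB b) = ΔB b) (z : B ⊗[k] U) :
    legB12 𝒦 (ΔBId ΔB z) = ΔBId ΔB z := by
  induction z using TensorProduct.induction_on with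
  | zero => rw [map_zero, map_zero]
  | add x y hx hy => rw [map_add, map_add, hx, hy]
  | tmul b u =>
    show legB12 𝒦 (Algebra.TensorProduct.map ΔB (AlgHom.id k U) (b ⊗ₜ[k] u)) = _
    rw [Algebra.TensorProduct.map_tmul]
    show Algebra.TensorProduct.congr 𝒦 AlgEquiv.refl (ΔB b ⊗ₜ[k] u) = _
    rw [Algebra.TensorProduct.congr_apply, Algebra.TensorProduct.map_tmul]
    show 𝒦 (ΔB b) ⊗ₜ[k] (AlgEquiv.refl (R := k) u) = _
    rw [K1]
    rfl

/-- `ι : U ⊗ U →ₐ (B ⊗ U) ⊗ U`, `z ↦ 1 ⊗ z` reassociated. -/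
def iotaB (k U B : Type*) [Field k] [Ring U] [HopfAlgebra k U] [Ring B] [Algebra k B] :
    (U ⊗[k] U) →ₐ[k] ((B ⊗[k] U) ⊗[k] U) :=
  ((Algebra.TensorProduct.assoc k k k B U U).symm.toAlgHom).comp
    Algebra.TensorProduct.includeRight

/-- `N : U ⊗ U →ₗ U ⊗ U`, `x ⊗ y ↦ Δ(x) · (1 ⊗ S(y))`. -/
def NmapU (k U : Type*) [Field k] [Ring U] [HopfAlgebra k U] :
    (U ⊗[k] U) →ₗ[k] (U ⊗[k] U) :=
  (LinearMap.mul' k (U ⊗[k] U)).comp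
    (TensorProduct.map (Bialgebra.comulAlgHom k U).toLinearMap
      ((Algebra.TensorProduct.includeRight : U →ₐ[k] U ⊗[k] U).toLinearMap.comp
        (HopfAlgebra.antipode (R := k))))

lemma NmapU_tmul (x y : U) :
    NmapU k U (x ⊗ₜ[k] y) =
      (Bialgebra.comulAlgHom k U x) * ((1 : U) ⊗ₜ[k] (HopfAlgebra.antipode (R := k) y)) := by
  simp [NmapU, LinearMap.mul'_apply]

/-- The Hopf identity `∑ u⁽¹⁾ ⊗ u⁽²⁾ S(u⁽³⁾) = u ⊗ 1`. -/
lemma NmapU_comul (u : U) :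
    NmapU k U (Coalgebra.comul (R := k) u) = u ⊗ₜ[k] (1 : U) := by
  classical
  set r : Coalgebra.Repr k u (U × U) := Coalgebra.Repr.arbitrary k u with hr
  set a₁ : (i : U × U) → Coalgebra.Repr k (r.left i) (U × U) :=
    fun i => Coalgebra.Repr.arbitrary k (r.left i) with ha₁
  set a₂ : (i : U × U) → Coalgebra.Repr k (r.right i) (U × U) :=
    fun i => Coalgebra.Repr.arbitrary k (r.right i) with ha₂
  have hL : NmapU k U (Coalgebra.comul (R := k) u) =
      ∑ i ∈ r.index, ∑ j ∈ (a₁ i).index,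
        (a₁ i).left j ⊗ₜ[k]
          ((a₁ i).right j * HopfAlgebra.antipode (R := k) (r.right i)) := by
    rw [← r.eq, map_sum]
    refine Finset.sum_congr rfl fun i _ => ?_
    rw [NmapU_tmul, Bialgebra.comulAlgHom_apply, ← (a₁ i).eq, Finset.sum_mul]
    refine Finset.sum_congr rfl fun j _ => ?_
    rw [Algebra.TensorProduct.tmul_mul_tmul, mul_one]
  have key := congrArg (LinearMap.lTensor (R := k) U (LinearMap.mul' k U))
    (Coalgebra.sum_map_tmul_tmul_eq (LinearMap.id) (LinearMap.id)
      (HopfAlgebra.antipode (R := k)) u (repr := r) (a₁ := a₁) (a₂ := a₂))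
  simp only [map_sum, LinearMap.lTensor_tmul, LinearMap.mul'_apply,
    LinearMap.id_coe, id_eq] at key
  rw [hL, ← key]
  have h2 : ∀ i ∈ r.index,
      ∑ j ∈ (a₂ i).index,
        r.left i ⊗ₜ[k] ((a₂ i).left j * HopfAlgebra.antipode (R := k) ((a₂ i).right j)) =
      Coalgebra.counit (R := k) (r.right i) • (r.left i ⊗ₜ[k] (1 : U)) := by
    intro i _
    rw [← TensorProduct.tmul_sum, HopfAlgebra.sum_mul_antipode_eq_smul (a₂ i),
      TensorProduct.tmul_smul]
  rw [Finset.sum_congr rfl h2]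
  have h3 := congrArg (LinearMap.lTensor (R := k) U (Algebra.linearMap k U))
    (Coalgebra.sum_tmul_counit_eq r)
  simp only [map_sum, LinearMap.lTensor_tmul, Algebra.linearMap_apply, map_one] at h3
  rw [← h3]
  refine Finset.sum_congr rfl fun i _ => ?_
  rw [Algebra.algebraMap_eq_smul_one, TensorProduct.tmul_smul]

lemma iotaB_comul (x : U) :
    iotaB k U B (Bialgebra.comulAlgHom k U x) = IdBΔ k U B ((1 : B) ⊗ₜ[k] x) := by
  simp [iotaB, IdBΔ, Algebra.TensorProduct.map_tmul]

lemma iotaB_right (ΔB : B →ₐ[k] B ⊗[k] U) (y : U) :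
    iotaB k U B ((1 : U) ⊗ₜ[k] y) = ΔBId ΔB ((1 : B) ⊗ₜ[k] y) := by
  simp [iotaB, ΔBId, Algebra.TensorProduct.map_tmul,
    Algebra.TensorProduct.assoc_symm_tmul, Algebra.TensorProduct.one_def]

lemma iotaB_tmul_one (u : U) :
    iotaB k U B (u ⊗ₜ[k] (1 : U)) = ((1 : B) ⊗ₜ[k] u) ⊗ₜ[k] (1 : U) := by
  simp [iotaB, Algebra.TensorProduct.assoc_symm_tmul]

end ReflectionAux

set_option maxHeartbeats 2000000 in
set_option maxRecDepth 4000 in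
/-- If `(U, ℛ)` is a weakly quasitriangular Hopf algebra and `(B, Δ_B, 𝒦)` a weakly
quasitriangular right comodule algebra over `(U, ℛ)`, then `𝒦` and `ℛ` satisfy the
reflection equation `𝒦₁₂ ∘ ℛ₃₂ ∘ 𝒦₁₃ ∘ ℛ₂₃ = ℛ₃₂ ∘ 𝒦₁₃ ∘ ℛ₂₃ ∘ 𝒦₁₂`
as algebra automorphisms of `B ⊗ U ⊗ U`. -/
theorem weaklyQuasitriangular_comodule_reflection
    {k : Type*} [Field k] {U : Type*} [Ring U] [HopfAlgebra k U]
    {B : Type*} [Ring B] [Algebra k B]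
    (ℛ : (U ⊗[k] U) ≃ₐ[k] (U ⊗[k] U))
    (wq1 : ∀ u : U, ℛ (Bialgebra.comulAlgHom k U u) = Δop k U u)
    (wq2 : ∀ x : U ⊗[k] U, ΔId k U (ℛ x) = leg13 ℛ (leg23 ℛ (ΔId k U x)))
    (wq3 : ∀ x : U ⊗[k] U, IdΔ k U (ℛ x) = leg13 ℛ (leg12 ℛ (IdΔ k U x)))
    (ΔB : B →ₐ[k] B ⊗[k] U) (hB : IsComoduleAlgebra ΔB)
    (𝒦 : (B ⊗[k] U) ≃ₐ[k] (B ⊗[k] U))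
    (K1 : ∀ b : B, 𝒦 (ΔB b) = ΔB b)
    (K2 : ∀ x : B ⊗[k] U, ΔBId ΔB (𝒦 x) = legU32 ℛ (legB13 𝒦 (legU23 ℛ (ΔBId ΔB x))))
    (K3 : ∀ x : B ⊗[k] U, IdBΔ k U B (𝒦 x) =
      legU32 ℛ (legB13 𝒦 (legU23 ℛ (legB12 𝒦 (IdBΔ k U B x))))) :
    ∀ y : (B ⊗[k] U) ⊗[k] U,
      legB12 𝒦 (legU32 ℛ (legB13 𝒦 (legU23 ℛ y))) =
        legU32 ℛ (legB13 𝒦 (legU23 ℛ (legB12 𝒦 y))) := by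
  classical
  set Φ : ((B ⊗[k] U) ⊗[k] U) →ₐ[k] ((B ⊗[k] U) ⊗[k] U) :=
    ((legB12 𝒦).toAlgHom).comp (((legU32 ℛ).toAlgHom).comp
      (((legB13 𝒦).toAlgHom).comp ((legU23 ℛ).toAlgHom))) with hΦdef
  set Ψ : ((B ⊗[k] U) ⊗[k] U) →ₐ[k] ((B ⊗[k] U) ⊗[k] U) :=
    ((legU32 ℛ).toAlgHom).comp (((legB13 𝒦).toAlgHom).comp
      (((legU23 ℛ).toAlgHom).comp ((legB12 𝒦).toAlgHom))) with hΨdef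
  have hΦ : ∀ t, Φ t = legB12 𝒦 (legU32 ℛ (legB13 𝒦 (legU23 ℛ t))) := fun t => by
    simp only [hΦdef, AlgHom.coe_comp, Function.comp_apply, AlgEquiv.toAlgHom_eq_coe,
      AlgHom.coe_coe]
    rfl
  have hΨ : ∀ t, Ψ t = legU32 ℛ (legB13 𝒦 (legU23 ℛ (legB12 𝒦 t))) := fun t => by
    simp only [hΨdef, AlgHom.coe_comp, Function.comp_apply, AlgEquiv.toAlgHom_eq_coe,
      AlgHom.coe_coe]
    rfl
  -- the reflection equation holds on the image of `Δ_B ⊗ id`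
  have hA : ∀ z : B ⊗[k] U, ΔBId ΔB z ∈ AlgHom.equalizer Φ Ψ := by
    intro z
    rw [AlgHom.mem_equalizer, hΦ, hΨ, legB12_fix 𝒦 ΔB K1 z, ← K2 z,
      legB12_fix 𝒦 ΔB K1 (𝒦 z)]
  -- the reflection equation holds on the image of `id_B ⊗ Δ`
  have hBmem : ∀ z : B ⊗[k] U, IdBΔ k U B z ∈ AlgHom.equalizer Φ Ψ := by
    intro z
    rw [AlgHom.mem_equalizer, hΦ, hΨ]
    apply (legU23 ℛ (B := B)).injective
    have h1 : τ23 k U B (legU32 ℛ (legB13 𝒦 (legU23 ℛ (legB12 𝒦 (IdBΔ k U B z))))) =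
        legU23 ℛ (legB12 𝒦 (legU32 ℛ (legB13 𝒦 (legU23 ℛ (IdBΔ k U B z))))) := by
      rw [tau_legU32, tau_legB13, tau_legU23, tau_legB12, tau_IdBΔ ℛ wq1]
    have h2 : τ23 k U B (legU32 ℛ (legB13 𝒦 (legU23 ℛ (legB12 𝒦 (IdBΔ k U B z))))) =
        legU23 ℛ (legU32 ℛ (legB13 𝒦 (legU23 ℛ (legB12 𝒦 (IdBΔ k U B z))))) := by
      rw [← K3 z]
      exact tau_IdBΔ ℛ wq1 (𝒦 z)
    exact h1.symm.trans h2
  -- the reflection equation holds on elements `1 ⊗ u ⊗ 1`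
  have hUmem : ∀ u : U, ((1 : B) ⊗ₜ[k] u) ⊗ₜ[k] (1 : U) ∈ AlgHom.equalizer Φ Ψ := by
    intro u
    have hN : ∀ z : U ⊗[k] U, iotaB k U B (NmapU k U z) ∈ AlgHom.equalizer Φ Ψ := by
      intro z
      induction z using TensorProduct.induction_on with
      | zero => rw [map_zero, map_zero]; exact zero_mem _
      | add a b ha hb => rw [map_add, map_add]; exact add_mem ha hb
      | tmul x y =>
        rw [NmapU_tmul, map_mul, iotaB_comul, iotaB_right ΔB]
        exact mul_mem (hBmem _) (hA _)
    have h := hN (Coalgebra.comul (R := k) u)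
    rwa [NmapU_comul, iotaB_tmul_one] at h
  -- every element of `(B ⊗ U) ⊗ U` lies in the equalizer
  have hall : ∀ t : (B ⊗[k] U) ⊗[k] U, t ∈ AlgHom.equalizer Φ Ψ := by
    intro t
    induction t using TensorProduct.induction_on with
    | zero => exact zero_mem _
    | add a b ha hb => exact add_mem ha hb
    | tmul x v =>
      induction x using TensorProduct.induction_on with
      | zero => rw [TensorProduct.zero_tmul]; exact zero_mem _
      | add a b ha hb => rw [TensorProduct.add_tmul]; exact add_mem ha hb
      | tmul b u =>
        have hdecomp : (b ⊗ₜ[k] u) ⊗ₜ[k] v =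
            (IdBΔ k U B (b ⊗ₜ[k] (1 : U))) * (((1 : B) ⊗ₜ[k] u) ⊗ₜ[k] (1 : U)) *
              (ΔBId ΔB ((1 : B) ⊗ₜ[k] v)) := by
          simp only [IdBΔ_tmul, map_one, ΔBId, Algebra.TensorProduct.map_tmul, AlgHom.coe_id,
            id_eq, Algebra.TensorProduct.one_def, Algebra.TensorProduct.assoc_symm_tmul,
            Algebra.TensorProduct.tmul_mul_tmul, one_mul, mul_one]
        rw [hdecomp]
        exact mul_mem (mul_mem (hBmem _) (hUmem u)) (hA _)
  intro y
  exact hall y
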